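/- arXiv:1312.3590 — 4 statements merged into one kernel-verified Lean document; each statement's English description precedes it below -/
import Mathlib

section
/- Let N ≥ 1 and let c_1, …, c_N be positive integers. Suppose t_1, …, t_N are real numbers, all greater than 1, satisfying t_k = c_k + 1/t_{k+1} for 1 ≤ k < N and t_N = c_N + 1/t_1 (i.e. θ := t_1 has purely periodic continued fraction expansion [c_1, …, c_N, c_1, …, c_N, …]). Let g = !![c_1, 1; 1, 0] * !![c_2, 1; 1, 0] * ⋯ * !![c_N, 1; 1, 0], written g = !![a, b; c, d] with integer entries. Then cθ + d > 0 and (aθ + b)/(cθ + d) = θ; that is, θ is fixed by the Möbius action of the matrix g ∈ GL_2(ℤ) built from one period of its continued fraction expansion. -/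
/-- The product of the matrices `!![c k, 1; 1, 0]` over one period of a
continued fraction expansion. -/
def cfMatrixProd (N : ℕ) (c : Fin N → ℤ) : Matrix (Fin 2) (Fin 2) ℤ :=
  (List.ofFn fun k : Fin N => !![c k, 1; 1, 0]).prod

lemma cf_aux (c' : ℕ → ℝ) (s : ℕ → ℝ) (hs : ∀ k, 0 < s k)
    (hrec : ∀ k, s k = c' k + 1 / s (k + 1)) :
    ∀ n, ((List.ofFn fun k : Fin n => !![c' k, 1; 1, 0]).prod).mulVec ![s n, 1]
      = (∏ k ∈ Finset.range n, s (k + 1)) • ![s 0, 1] := by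
  intro n
  induction n with
  | zero => simp
  | succ n ih =>
    have hofn : (List.ofFn fun k : Fin (n+1) => !![c' k, 1; 1, 0]).prod
        = (List.ofFn fun k : Fin n => !![c' k, 1; 1, 0]).prod * !![c' n, 1; 1, 0] := by
      rw [List.ofFn_succ']
      simp [List.concat_eq_append]
    have hstep : (!![c' n, 1; 1, 0] : Matrix (Fin 2) (Fin 2) ℝ).mulVec ![s (n+1), 1]
        = s (n+1) • ![s n, 1] := by
      have h := hrec n
      have hne : s (n+1) ≠ 0 := (hs (n+1)).ne'
      funext i
      fin_cases i
      · simp [Matrix.mulVec, dotProduct, Fin.sum_univ_two]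
        rw [h]; field_simp
      · simp [Matrix.mulVec, dotProduct, Fin.sum_univ_two]
    rw [hofn, ← Matrix.mulVec_mulVec, hstep, Matrix.mulVec_smul, ih,
      Finset.prod_range_succ, smul_smul, mul_comm]

open Fin.NatCast in
/-- If `θ = t 0` has purely periodic continued fraction expansion
`[c 0, …, c (N-1), c 0, …]`, then `θ` is fixed by the Möbius action of the
matrix `g = !![c 0,1;1,0] * ⋯ * !![c (N-1),1;1,0]` built from one period,
and the denominator `c·θ + d` is positive. -/
theorem periodic_continued_fraction_fixed_point
    (N : ℕ) [NeZero N] (hN : 1 ≤ N) (c : Fin N → ℤ) (hc : ∀ k, 0 < c k)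
    (t : Fin N → ℝ) (ht : ∀ k, 1 < t k)
    (hrec : ∀ k : Fin N, t k = (c k : ℝ) + 1 / t (k + 1)) :
    0 < (cfMatrixProd N c 1 0 : ℝ) * t 0 + (cfMatrixProd N c 1 1 : ℝ) ∧
    ((cfMatrixProd N c 0 0 : ℝ) * t 0 + (cfMatrixProd N c 0 1 : ℝ)) /
      ((cfMatrixProd N c 1 0 : ℝ) * t 0 + (cfMatrixProd N c 1 1 : ℝ)) = t 0 := by
  set s : ℕ → ℝ := fun k => t (k : Fin N) with hs_def
  set c' : ℕ → ℝ := fun k => ((c (k : Fin N) : ℤ) : ℝ) with hc'_def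
  have hs : ∀ k, 0 < s k := fun k => lt_trans one_pos (ht _)
  have hrec' : ∀ k, s k = c' k + 1 / s (k + 1) := by
    intro k
    have : ((k + 1 : ℕ) : Fin N) = (k : Fin N) + 1 := by push_cast; ring
    simp only [hs_def, hc'_def, this]
    exact hrec _
  -- relate cfMatrixProd to the real matrix product
  have hmap : (cfMatrixProd N c).map ((↑) : ℤ → ℝ)
      = (List.ofFn fun k : Fin N => !![c' k, 1; 1, 0]).prod := by
    have h1 : (cfMatrixProd N c).map ((↑) : ℤ → ℝ)
        = (Int.castRingHom ℝ).mapMatrix (List.ofFn fun k : Fin N => !![c k, 1; 1, 0]).prod := rfl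
    rw [h1, map_list_prod, List.map_ofFn]
    refine congrArg List.prod (congrArg List.ofFn (funext fun k => ?_))
    ext i j
    fin_cases i <;> fin_cases j <;>
      simp [hc'_def, RingHom.mapMatrix_apply, Matrix.map_apply, Function.comp]
  have key := cf_aux c' s hs hrec' N
  have hsN : s N = t 0 := by simp [hs_def]
  have hs0 : s 0 = t 0 := by simp [hs_def]
  rw [hsN, hs0, ← hmap] at key
  set lam := ∏ k ∈ Finset.range N, s (k + 1) with hlam
  have hlampos : 0 < lam := Finset.prod_pos fun k _ => hs _
  have h0 := congrFun key 0
  have h1 := congrFun key 1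
  simp [Matrix.mulVec, dotProduct, Fin.sum_univ_two, Matrix.map_apply] at h0 h1
  constructor
  · rw [h1]; exact hlampos
  · rw [h0, h1]; exact mul_div_cancel_left₀ _ hlampos.ne'
end

section
/- Let θ ∈ ℝ be a quadratic irrationality: θ is irrational and satisfies Aθ² + Bθ + C = 0 for some integers A, B, C with A ≠ 0. Then there exists a matrix g = !![a, b; c, d] with integer entries, determinant ad − bc = 1, g ≠ 1 and g ≠ −1, such that cθ + d ≠ 0 and (aθ + b)/(cθ + d) = θ; i.e. θ is fixed by the Möbius action of a nontrivial element of SL_2(ℤ). -/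
/-- If `p * θ + q = 0` with `p ≠ 0` integers, then `θ` is rational. -/
lemma not_irrational_of_linear (θ : ℝ) (p q : ℤ) (hp : p ≠ 0)
    (h : (p : ℝ) * θ + (q : ℝ) = 0) : ¬ Irrational θ := by
  intro hirr
  apply hirr
  refine ⟨(-q : ℚ) / (p : ℚ), ?_⟩
  have hp' : (p : ℝ) ≠ 0 := Int.cast_ne_zero.mpr hp
  push_cast
  field_simp
  linarith

/-- Every quadratic irrationality `θ` is fixed by the Möbius action of a
nontrivial matrix `g ∈ SL₂(ℤ)` (i.e. `g ≠ 1`, `g ≠ -1`, `det g = 1`). -/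
theorem quadratic_irrational_fixed_by_sl2 (θ : ℝ) (hirr : Irrational θ)
    (A B C : ℤ) (hA : A ≠ 0) (hquad : (A : ℝ) * θ ^ 2 + (B : ℝ) * θ + (C : ℝ) = 0) :
    ∃ g : Matrix (Fin 2) (Fin 2) ℤ, g.det = 1 ∧ g ≠ 1 ∧ g ≠ -1 ∧
      ((g 1 0 : ℝ) * θ + (g 1 1 : ℝ)) ≠ 0 ∧
      ((g 0 0 : ℝ) * θ + (g 0 1 : ℝ)) / ((g 1 0 : ℝ) * θ + (g 1 1 : ℝ)) = θ := by
  set D : ℤ := B ^ 2 - 4 * A * C with hD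
  have key : ((2 * A : ℝ) * θ + (B : ℝ)) ^ 2 = (D : ℝ) := by
    push_cast [hD]; linear_combination (4*(A:ℝ)) * hquad
  -- D is not a square
  have hDnonsq : ¬ IsSquare D := by
    rintro ⟨k, hk⟩
    have h2 : ((2 * A : ℝ) * θ + (B : ℝ)) ^ 2 = ((k : ℝ)) ^ 2 := by
      rw [key]; push_cast [hk]; ring
    have h3 : ((2 * A : ℝ) * θ + (B : ℝ) - k) * ((2 * A : ℝ) * θ + (B : ℝ) + k) = 0 := by
      nlinarith [h2]
    have h2A : (2 * A : ℤ) ≠ 0 := by simpa using hA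
    rcases mul_eq_zero.mp h3 with h | h
    · exact not_irrational_of_linear θ (2 * A) (B - k) h2A (by push_cast; linarith) hirr
    · exact not_irrational_of_linear θ (2 * A) (B + k) h2A (by push_cast; linarith) hirr
  have hDpos : 0 < D := by
    have hne : (2 * A : ℝ) * θ + (B : ℝ) ≠ 0 := by
      intro h
      exact not_irrational_of_linear θ (2 * A) B (by simpa using hA) (by push_cast; linarith) hirr
    have : (0 : ℝ) < (D : ℝ) := by
      rw [← key]; positivity
    exact_mod_cast this
  obtain ⟨x, y, hxy, hy⟩ := Pell.exists_of_not_isSquare hDpos hDnonsq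
  refine ⟨!![x - B * y, -2 * C * y; 2 * A * y, x + B * y], ?_, ?_, ?_, ?_, ?_⟩
  · simp [Matrix.det_fin_two_of]
    linear_combination hxy
  · intro h
    have := congrFun (congrFun h 1) 0
    simp at this
    exact absurd this (by simp [hA, hy])
  · intro h
    have := congrFun (congrFun h 1) 0
    simp at this
    exact absurd this (by simp [hA, hy])
  · show ((2 * A * y : ℤ) : ℝ) * θ + ((x + B * y : ℤ) : ℝ) ≠ 0
    intro h
    refine not_irrational_of_linear θ (2 * A * y) (x + B * y) (by simp [hA, hy]) ?_ hirr
    push_cast at h ⊢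
    linarith
  · have hden : ((2 * A * y : ℤ) : ℝ) * θ + ((x + B * y : ℤ) : ℝ) ≠ 0 := by
      intro h
      refine not_irrational_of_linear θ (2 * A * y) (x + B * y) (by simp [hA, hy]) ?_ hirr
      push_cast at h ⊢
      linarith
    show (((x - B * y : ℤ) : ℝ) * θ + ((-2 * C * y : ℤ) : ℝ)) /
        (((2 * A * y : ℤ) : ℝ) * θ + ((x + B * y : ℤ) : ℝ)) = θ
    rw [div_eq_iff hden]
    push_cast
    linear_combination (-2*(y:ℝ)) * hquad
end

section
/- Let t, λ be real numbers with λ² = t·λ + 1 (so λ ≠ 0), and let N_1 = !![t, 1; 1, 0]. Define S = (1 + λ²)^(−1/2) • !![λ, 1; 1, −λ]. Then S is an orthogonal (real unitary) matrix: Sᵀ * S = 1; its columns are eigenvectors of the symmetric matrix N_1, and Sᵀ * N_1 * S = !![λ, 0; 0, −λ⁻¹]. In particular, when λ = cθ + d for g = !![a,b;c,d] with det g = −1 and g fixing θ under the Möbius action, this gives the unitary matrix of eigenvectors (the S̃-matrix) of the fusion matrix N_1 of the real multiplication anyon system, with eigenvalues λ and −1/λ. -/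
open Matrix

/-- For `λ` with `λ² = tλ + 1`, the matrix
`S = (1+λ²)^(−1/2) • !![λ,1;1,−λ]` is orthogonal, its columns are eigenvectors
of the fusion matrix `N₁ = !![t,1;1,0]`, and `Sᵀ N₁ S = diag(λ, −λ⁻¹)`. -/
theorem smatrix_diagonalizes_fusion_matrix (t lam : ℝ)
    (hquad : lam ^ 2 = t * lam + 1) :
    lam ≠ 0 ∧
    (!![t, 1; 1, 0] : Matrix (Fin 2) (Fin 2) ℝ).mulVec ![lam, 1] = lam • ![lam, 1] ∧
    (!![t, 1; 1, 0] : Matrix (Fin 2) (Fin 2) ℝ).mulVec ![1, -lam] =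
      (-lam⁻¹) • ![1, -lam] ∧
    (((1 + lam ^ 2) ^ (-(1/2 : ℝ))) • (!![lam, 1; 1, -lam] : Matrix (Fin 2) (Fin 2) ℝ))ᵀ *
        (((1 + lam ^ 2) ^ (-(1/2 : ℝ))) • (!![lam, 1; 1, -lam] : Matrix (Fin 2) (Fin 2) ℝ)) = 1 ∧
    (((1 + lam ^ 2) ^ (-(1/2 : ℝ))) • (!![lam, 1; 1, -lam] : Matrix (Fin 2) (Fin 2) ℝ))ᵀ *
        !![t, 1; 1, 0] *
        (((1 + lam ^ 2) ^ (-(1/2 : ℝ))) • (!![lam, 1; 1, -lam] : Matrix (Fin 2) (Fin 2) ℝ)) =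
      !![lam, 0; 0, -lam⁻¹] := by
  have hlam : lam ≠ 0 := by
    intro h; rw [h] at hquad; norm_num at hquad
  have hpos : (0:ℝ) < 1 + lam ^ 2 := by positivity
  set c : ℝ := (1 + lam ^ 2) ^ (-(1/2 : ℝ)) with hc
  have hc2 : c * c = (1 + lam ^ 2)⁻¹ := by
    rw [hc, ← Real.rpow_add hpos]
    norm_num [Real.rpow_neg_one]
  clear_value c
  refine ⟨hlam, ?_, ?_, ?_, ?_⟩
  · funext i; fin_cases i <;>
      simp [mulVec, dotProduct, Fin.sum_univ_two] <;> nlinarith [hquad]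
  · funext i; fin_cases i <;>
      simp [mulVec, dotProduct, Fin.sum_univ_two] <;> field_simp <;> nlinarith [hquad]
  all_goals {
    have hS : c • (!![lam, 1; 1, -lam] : Matrix (Fin 2) (Fin 2) ℝ) =
        !![c * lam, c; c, -(c * lam)] := by
      ext i j; fin_cases i <;> fin_cases j <;> simp
    have hT : (!![c * lam, c; c, -(c * lam)] : Matrix (Fin 2) (Fin 2) ℝ)ᵀ =
        !![c * lam, c; c, -(c * lam)] := by
      ext i j; fin_cases i <;> fin_cases j <;> simp
    have h1 : c * c * (1 + lam ^ 2) = 1 := by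
      rw [hc2]; field_simp
    rw [hS, hT]
    ext i j
    fin_cases i <;> fin_cases j <;>
      simp [Matrix.mul_apply, Fin.sum_univ_two, Matrix.one_apply] <;>
      (try field_simp) <;>
      first
        | ring1
        | linear_combination h1
        | linear_combination (-(c * c)) * hquad
        | linear_combination lam * h1 - c * c * lam * hquad
        | linear_combination (-(c * c)) * hquad - h1
        | linear_combination h1 - c * c * hquad }
end

section
/- Let τ = (1 + √5)/2, and set p = τ⁻¹, q = τ^(−1/2), r = τ^(−1/2), s = −τ⁻¹. Let F = !![p, q; r, s] ∈ Matrix (Fin 2) (Fin 2) ℝ. Then: (i) F is symmetric and orthogonal, with F * F = 1 (so with t = 1 the 2×2 pentagon equation diag(1,t)·diag(1,t) = F·diag(1,t)·F holds); (ii) setting M₁ = !![1,0,0; 0,p,q; 0,r,s], P = !![0,1,0; 1,0,0; 0,0,1] and M₂ = !![p,0,q; 0,1,0; r,0,s] in Matrix (Fin 3) (Fin 3) ℝ, the 3×3 pentagon equation M₁ * P * M₁ = M₂ * M₁ * M₂ holds. Hence F^{111}_0 = 1 and F^{111}_1 = F solve the pentagon equations of the Fibonacci anyon model together with the unitarity constraint.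 -/
open Matrix

/-- `p = τ⁻¹`, with `τ` the golden ratio. -/
noncomputable def fibFp : ℝ := (((1 + Real.sqrt 5) / 2))⁻¹

/-- `q = τ^(−1/2)`, with `τ` the golden ratio. -/
noncomputable def fibFq : ℝ := ((1 + Real.sqrt 5) / 2) ^ (-(1 / 2 : ℝ))

lemma fib_tau_pos : (0:ℝ) < (1 + Real.sqrt 5) / 2 := by
  have := Real.sqrt_nonneg 5; linarith

lemma fib_hq2 : fibFq ^ 2 = fibFp := by
  unfold fibFq fibFp
  rw [← Real.rpow_natCast (((1 + Real.sqrt 5) / 2) ^ (-(1/2:ℝ))) 2,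
    ← Real.rpow_mul fib_tau_pos.le]
  norm_num [Real.rpow_neg_one, inv_div]

lemma fib_hp2 : fibFp ^ 2 = 1 - fibFp := by
  have h5 : Real.sqrt 5 ^ 2 = 5 := Real.sq_sqrt (by norm_num)
  have ht := fib_tau_pos
  unfold fibFp
  field_simp
  nlinarith [h5]

/-- The F-matrices `F^{111}_0 = 1` and `F^{111}_1 = !![τ⁻¹, τ^(−1/2); τ^(−1/2), −τ⁻¹]`
solve the pentagon equations of the Fibonacci anyon model: `F` is symmetric and
orthogonal with `F * F = 1` (so the 2×2 pentagon equation with `t = 1` holds),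
and the 3×3 pentagon equation `M₁ * P * M₁ = M₂ * M₁ * M₂` holds. -/
theorem fibonacci_pentagon_solution :
    (!![fibFp, fibFq; fibFq, -fibFp] : Matrix (Fin 2) (Fin 2) ℝ)ᵀ =
      !![fibFp, fibFq; fibFq, -fibFp] ∧
    (!![fibFp, fibFq; fibFq, -fibFp] : Matrix (Fin 2) (Fin 2) ℝ) *
      !![fibFp, fibFq; fibFq, -fibFp] = 1 ∧
    (!![(1:ℝ), 0; 0, 1] : Matrix (Fin 2) (Fin 2) ℝ) * !![(1:ℝ), 0; 0, 1] =
      !![fibFp, fibFq; fibFq, -fibFp] * !![(1:ℝ), 0; 0, 1] *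
        !![fibFp, fibFq; fibFq, -fibFp] ∧
    (!![1, 0, 0; 0, fibFp, fibFq; 0, fibFq, -fibFp] : Matrix (Fin 3) (Fin 3) ℝ) *
        !![0, 1, 0; 1, 0, 0; 0, 0, 1] *
        !![1, 0, 0; 0, fibFp, fibFq; 0, fibFq, -fibFp] =
      !![fibFp, 0, fibFq; 0, 1, 0; fibFq, 0, -fibFp] *
        !![1, 0, 0; 0, fibFp, fibFq; 0, fibFq, -fibFp] *
        !![fibFp, 0, fibFq; 0, 1, 0; fibFq, 0, -fibFp] := by
  have hq := fib_hq2
  have hp := fib_hp2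
  refine ⟨?_, ?_, ?_, ?_⟩ <;>
    ext i j <;> fin_cases i <;> fin_cases j <;>
      simp [Matrix.mul_apply, Fin.sum_univ_succ, Matrix.one_apply] <;>
      first
        | nlinarith [hq, hp]
        | linear_combination (-fibFq) * hp
end
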